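/- Let Π be the ground DFLP^FA program consisting of the rules: (r1) a(1,1):0.8 ∨ a(1,2):0.4 ← ; (r2) a(2,1):0.3 ∨ a(2,2):0.9 ← ; (r3) Γ:1 ← not Γ:1, (min_F(S) ≤ 1):0.4, where Γ is an atom distinct from all a(i,j) and S = { ⟨1:0.8 | a(1,1):0.8⟩, ⟨2:0.4 | a(1,2):0.4⟩, ⟨1:0.3 | a(2,1):0.3⟩, ⟨2:0.9 | a(2,2):0.9⟩ }. Then Π has exactly three fuzzy answer sets: I₁ with I₁(a(1,1)) = 0.8, I₁(a(2,1)) = 0.3 and value 0 on all other atoms; I₂ with I₂(a(1,2)) = 0.4, I₂(a(2,1)) = 0.3 and value 0 on all other atoms; and I₃ with I₃(a(1,2)) = 0.4, I₃(a(2,2)) = 0.9 and value 0 on all other atoms. -/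

import Mathlib

open scoped Classical

noncomputable section

/-- Grade membership values: elements of the unit interval [0,1]. -/
abbrev Grade := unitInterval

/-- An element ⟨X:U | C⟩ of a ground fuzzy set: a real term X, a grade U,
and a finite conjunction C of fuzzy annotated atoms. -/
structure FuzzyPair (Atom : Type) where
  term : ℝ
  grade : Grade
  conj : List (Atom × Grade)

/-- A ground fuzzy set: a set of pairs ⟨X:U | C⟩. -/
abbrev GroundFuzzySet (Atom : Type) := Finset (FuzzyPair Atom)

/-- Fuzzy aggregate function symbols. -/
inductive AggFun
  | sumF | timesF | minF | maxF | countF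

/-- Comparison operators for aggregate atoms. -/
inductive CmpOp
  | eq | ne | lt | gt | le | ge

def CmpOp.apply : CmpOp → ℝ → ℝ → Prop
  | .eq, x, t => x = t
  | .ne, x, t => x ≠ t
  | .lt, x, t => x < t
  | .gt, x, t => x > t
  | .le, x, t => x ≤ t
  | .ge, x, t => x ≥ t

/-- A conjunction of fuzzy annotated atoms is true w.r.t. I iff every a:μ in it has μ ≤ I(a). -/
def conjTrue {Atom : Type} (I : Atom → Grade) (C : List (Atom × Grade)) : Prop :=
  ∀ p ∈ C, p.2 ≤ I p.1

/-- S_I : the multiset {{ X:U | ⟨X:U | C⟩ ∈ S and C is true w.r.t. I }}. -/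
def fuzzySetEval {Atom : Type} (I : Atom → Grade) (S : GroundFuzzySet Atom) :
    Multiset (ℝ × Grade) :=
  (S.val.filter (fun p => conjTrue I p.conj)).map (fun p => (p.term, p.grade))

/-- Minimum of the grade (second) components of a multiset; 1 on the empty multiset. -/
def minGrade (M : Multiset (ℝ × Grade)) : Grade :=
  (M.map Prod.snd).fold min 1

/-- Evaluation of a fuzzy aggregate on a multiset; `none` represents ⊥ (undefined). -/
def aggEval : AggFun → Multiset (ℝ × Grade) → Option (ℝ × Grade)
  | .sumF, M => some ((M.map Prod.fst).sum, minGrade M)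
  | .timesF, M => some ((M.map Prod.fst).prod, minGrade M)
  | .minF, M => if M = 0 then none else some (sInf {x | x ∈ M.map Prod.fst}, minGrade M)
  | .maxF, M => if M = 0 then none else some (sSup {x | x ∈ M.map Prod.fst}, minGrade M)
  | .countF, M => some ((Multiset.card M : ℝ), minGrade M)

/-- A body element: an atom or a ground fuzzy aggregate atom f(S) ≺ T. -/
inductive BodyAtom (Atom : Type)
  | atom (a : Atom)
  | agg (f : AggFun) (S : GroundFuzzySet Atom) (op : CmpOp) (T : ℝ)

/-- A body literal: a possibly negated annotated body atom. -/
structure BodyLit (Atom : Type) where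
  neg : Bool
  batom : BodyAtom Atom
  grade : Grade

/-- A ground DFLP^FA rule: annotated head disjuncts and a body of literals. -/
structure Rule (Atom : Type) where
  head : List (Atom × Grade)
  body : List (BodyLit Atom)

/-- Satisfaction of an annotated (non-negated) body atom. -/
def satBodyAtom {Atom : Type} (I : Atom → Grade) : BodyAtom Atom → Grade → Prop
  | .atom a, μ => μ ≤ I a
  | .agg f S op T, μ =>
      ∃ x ν, aggEval f (fuzzySetEval I S) = some (x, ν) ∧ CmpOp.apply op x T ∧ μ ≤ ν

/-- Satisfaction of a body literal (negation is failure of satisfaction). -/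
def satLit {Atom : Type} (I : Atom → Grade) (l : BodyLit Atom) : Prop :=
  if l.neg then ¬ satBodyAtom I l.batom l.grade else satBodyAtom I l.batom l.grade

def satBody {Atom : Type} (I : Atom → Grade) (r : Rule Atom) : Prop :=
  ∀ l ∈ r.body, satLit I l

def satHead {Atom : Type} (I : Atom → Grade) (r : Rule Atom) : Prop :=
  ∃ h ∈ r.head, h.2 ≤ I h.1

def satRule {Atom : Type} (I : Atom → Grade) (r : Rule Atom) : Prop :=
  satBody I r → satHead I r

/-- I is a fuzzy model of Π: I satisfies every rule and, for every atom a,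
max{{ μ | some rule r ∈ Π has I satisfying body(r) and a:μ a head disjunct satisfied by I }} ≤ I(a). -/
def isFuzzyModel {Atom : Type} (I : Atom → Grade) (P : Set (Rule Atom)) : Prop :=
  (∀ r ∈ P, satRule I r) ∧
  ∀ a μ, (∃ r ∈ P, satBody I r ∧ (a, μ) ∈ r.head ∧ μ ≤ I a) → μ ≤ I a

/-- ≤-minimal fuzzy model: no fuzzy model I' with I' < I (pointwise I' ≤ I and I' ≠ I). -/
def isMinimalFuzzyModel {Atom : Type} (I : Atom → Grade) (P : Set (Rule Atom)) : Prop :=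
  isFuzzyModel I P ∧ ¬ ∃ I' : Atom → Grade, isFuzzyModel I' P ∧ I' ≤ I ∧ I' ≠ I

/-- The fuzzy reduct Π^I = { r ∈ Π | I satisfies body(r) }. -/
def fuzzyReduct {Atom : Type} (P : Set (Rule Atom)) (I : Atom → Grade) : Set (Rule Atom) :=
  {r ∈ P | satBody I r}

/-- I is a fuzzy answer set of Π iff I is a ≤-minimal fuzzy model of Π^I. -/
def isFuzzyAnswerSet {Atom : Type} (I : Atom → Grade) (P : Set (Rule Atom)) : Prop :=
  isMinimalFuzzyModel I (fuzzyReduct P I)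

end

noncomputable section

def gr03 : Grade := ⟨0.3, Set.mem_Icc.mpr ⟨by norm_num, by norm_num⟩⟩
def gr04 : Grade := ⟨0.4, Set.mem_Icc.mpr ⟨by norm_num, by norm_num⟩⟩
def gr08 : Grade := ⟨0.8, Set.mem_Icc.mpr ⟨by norm_num, by norm_num⟩⟩
def gr09 : Grade := ⟨0.9, Set.mem_Icc.mpr ⟨by norm_num, by norm_num⟩⟩

/-- The ground fuzzy set
S = { ⟨1:0.8 | a(1,1):0.8⟩, ⟨2:0.4 | a(1,2):0.4⟩, ⟨1:0.3 | a(2,1):0.3⟩, ⟨2:0.9 | a(2,2):0.9⟩ }. -/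
def exS {Atom : Type} (a : ℕ → ℕ → Atom) : GroundFuzzySet Atom :=
  { ⟨1, gr08, [(a 1 1, gr08)]⟩, ⟨2, gr04, [(a 1 2, gr04)]⟩,
    ⟨1, gr03, [(a 2 1, gr03)]⟩, ⟨2, gr09, [(a 2 2, gr09)]⟩ }

end

noncomputable section

/-- (r1)  a(1,1):0.8 ∨ a(1,2):0.4 ← . -/
def exRule1 {Atom : Type} (a : ℕ → ℕ → Atom) : Rule Atom :=
  ⟨[(a 1 1, gr08), (a 1 2, gr04)], []⟩

/-- (r2)  a(2,1):0.3 ∨ a(2,2):0.9 ← . -/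
def exRule2 {Atom : Type} (a : ℕ → ℕ → Atom) : Rule Atom :=
  ⟨[(a 2 1, gr03), (a 2 2, gr09)], []⟩

/-- (r3)  Γ:1 ← not Γ:1, (min_F(S) ≤ 1):0.4. -/
def exRule3 {Atom : Type} (a : ℕ → ℕ → Atom) (Γ : Atom) : Rule Atom :=
  ⟨[(Γ, 1)],
   [⟨true, BodyAtom.atom Γ, 1⟩,
    ⟨false, BodyAtom.agg AggFun.minF (exS a) CmpOp.le 1, gr04⟩]⟩

/-- The program Π = {r1, r2, r3}. -/
def exProg {Atom : Type} (a : ℕ → ℕ → Atom) (Γ : Atom) : Set (Rule Atom) :=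
  {exRule1 a, exRule2 a, exRule3 a Γ}

/-- I₁ : a(1,1) ↦ 0.8, a(2,1) ↦ 0.3, all other atoms ↦ 0. -/
def exI1 {Atom : Type} (a : ℕ → ℕ → Atom) : Atom → Grade :=
  fun b => if b = a 1 1 then gr08 else if b = a 2 1 then gr03 else 0

/-- I₂ : a(1,2) ↦ 0.4, a(2,1) ↦ 0.3, all other atoms ↦ 0. -/
def exI2 {Atom : Type} (a : ℕ → ℕ → Atom) : Atom → Grade :=
  fun b => if b = a 1 2 then gr04 else if b = a 2 1 then gr03 else 0

/-- I₃ : a(1,2) ↦ 0.4, a(2,2) ↦ 0.9, all other atoms ↦ 0. -/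
def exI3 {Atom : Type} (a : ℕ → ℕ → Atom) : Atom → Grade :=
  fun b => if b = a 1 2 then gr04 else if b = a 2 2 then gr09 else 0

/-- I' : a(1,1) ↦ 0.8, a(2,2) ↦ 0.9, all other atoms ↦ 0. -/
def exI' {Atom : Type} (a : ℕ → ℕ → Atom) : Atom → Grade :=
  fun b => if b = a 1 1 then gr08 else if b = a 2 2 then gr09 else 0

end


section Helpers

variable {Atom : Type}

lemma fold_min_le {α : Type*} [LinearOrder α] (s : Multiset α) (b x : α) (hx : x ∈ s) :
    s.fold min b ≤ x := by
  induction s using Multiset.induction with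
  | empty => simp at hx
  | cons a s ih =>
    rw [Multiset.fold_cons_left]
    rcases Multiset.mem_cons.mp hx with h | h
    · subst h; exact min_le_left _ _
    · exact le_trans (min_le_right _ _) (ih h)

lemma le_fold_min {α : Type*} [LinearOrder α] (s : Multiset α) (b c : α)
    (hb : c ≤ b) (h : ∀ x ∈ s, c ≤ x) : c ≤ s.fold min b := by
  induction s using Multiset.induction with
  | empty => simpa [Multiset.fold_zero]
  | cons a s ih =>
    rw [Multiset.fold_cons_left]
    exact le_min (h a (Multiset.mem_cons_self a s))
      (ih fun x hx => h x (Multiset.mem_cons_of_mem hx))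

lemma mem_fuzzySetEval (I : Atom → Grade) (S : GroundFuzzySet Atom) (q : ℝ × Grade) :
    q ∈ fuzzySetEval I S ↔ ∃ p ∈ S, conjTrue I p.conj ∧ q = (p.term, p.grade) := by
  simp only [fuzzySetEval, Multiset.mem_map, Multiset.mem_filter, Finset.mem_val]
  constructor
  · rintro ⟨p, ⟨hp, hc⟩, rfl⟩; exact ⟨p, hp, hc, rfl⟩
  · rintro ⟨p, hp, hc, rfl⟩; exact ⟨p, ⟨hp, hc⟩, rfl⟩

lemma mem_evalS (a : ℕ → ℕ → Atom) (I : Atom → Grade) (q : ℝ × Grade) :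
    q ∈ fuzzySetEval I (exS a) ↔
      (q = (1, gr08) ∧ gr08 ≤ I (a 1 1)) ∨ (q = (2, gr04) ∧ gr04 ≤ I (a 1 2)) ∨
      (q = (1, gr03) ∧ gr03 ≤ I (a 2 1)) ∨ (q = (2, gr09) ∧ gr09 ≤ I (a 2 2)) := by
  rw [mem_fuzzySetEval]
  simp only [exS, Finset.mem_insert, Finset.mem_singleton]
  constructor
  · rintro ⟨p, (rfl | rfl | rfl | rfl), hc, rfl⟩
    · exact Or.inl ⟨rfl, hc (a 1 1, gr08) (by simp)⟩
    · exact Or.inr (Or.inl ⟨rfl, hc (a 1 2, gr04) (by simp)⟩)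
    · exact Or.inr (Or.inr (Or.inl ⟨rfl, hc (a 2 1, gr03) (by simp)⟩))
    · exact Or.inr (Or.inr (Or.inr ⟨rfl, hc (a 2 2, gr09) (by simp)⟩))
  · rintro (⟨rfl, h⟩ | ⟨rfl, h⟩ | ⟨rfl, h⟩ | ⟨rfl, h⟩)
    · exact ⟨_, Or.inl rfl, by simpa [conjTrue], rfl⟩
    · exact ⟨_, Or.inr (Or.inl rfl), by simpa [conjTrue], rfl⟩
    · exact ⟨_, Or.inr (Or.inr (Or.inl rfl)), by simpa [conjTrue], rfl⟩
    · exact ⟨_, Or.inr (Or.inr (Or.inr rfl)), by simpa [conjTrue], rfl⟩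

lemma g48 : gr04 ≤ gr08 := Subtype.mk_le_mk.mpr (by norm_num)
lemma g49 : gr04 ≤ gr09 := Subtype.mk_le_mk.mpr (by norm_num)
lemma g44 : gr04 ≤ gr04 := le_refl _
lemma g41 : gr04 ≤ (1 : Grade) := unitInterval.le_one'
lemma not_g43 : ¬ gr04 ≤ gr03 := by
  rw [gr03, gr04, Subtype.mk_le_mk]; norm_num
lemma not_le_zero (g : Grade) (h : (0:ℝ) < g) : ¬ g ≤ 0 := by
  rw [← Subtype.coe_le_coe]; intro h'; exact absurd (lt_of_lt_of_le h h') (by norm_num)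

lemma minGrade_le {M : Multiset (ℝ × Grade)} {q : ℝ × Grade} (hq : q ∈ M) :
    minGrade M ≤ q.2 := by
  rw [minGrade]; exact fold_min_le _ _ _ (Multiset.mem_map_of_mem _ hq)

lemma le_minGrade {M : Multiset (ℝ × Grade)} {c : Grade} (hc : c ≤ 1)
    (h : ∀ q ∈ M, c ≤ q.2) : c ≤ minGrade M := by
  rw [minGrade]
  refine le_fold_min _ _ _ hc ?_
  rintro x hx
  obtain ⟨q, hq, rfl⟩ := Multiset.mem_map.mp hx
  exact h q hq

lemma bodyR3_iff (a : ℕ → ℕ → Atom) (Γ : Atom) (I : Atom → Grade) :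
    satBody I (exRule3 a Γ) ↔
      ¬ (1 ≤ I Γ) ∧ gr08 ≤ I (a 1 1) ∧ ¬ (gr03 ≤ I (a 2 1)) := by
  simp only [satBody, exRule3, List.mem_cons, List.not_mem_nil]
  constructor
  · intro h
    have hΓ := h _ (Or.inl rfl)
    have hagg := h _ (Or.inr (Or.inl rfl))
    simp only [satLit, if_true, if_false, satBodyAtom] at hΓ hagg
    obtain ⟨x, ν, heq, hx1, hν⟩ := hagg
    have hx1' : x ≤ 1 := hx1
    set M := fuzzySetEval I (exS a) with hM
    have hM0 : M ≠ 0 := by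
      intro h0; rw [aggEval, h0] at heq; simp at heq
    rw [show aggEval AggFun.minF M = some (sInf {x | x ∈ M.map Prod.fst}, minGrade M) from
      by rw [aggEval, if_neg hM0]] at heq
    obtain ⟨hx, hνe⟩ : sInf {x | x ∈ M.map Prod.fst} = x ∧ minGrade M = ν := by
      have := Option.some.inj heq; exact ⟨congrArg Prod.fst this, congrArg Prod.snd this⟩
    have h21 : ¬ gr03 ≤ I (a 2 1) := by
      intro h21
      have hmem : ((1:ℝ), gr03) ∈ M := (mem_evalS a I _).mpr (Or.inr (Or.inr (Or.inl ⟨rfl, h21⟩)))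
      have : minGrade M ≤ gr03 := minGrade_le hmem
      rw [hνe] at this
      exact not_g43 (le_trans hν this)
    refine ⟨hΓ, ?_, h21⟩
    by_contra h11
    have h2le : (2:ℝ) ≤ sInf {x | x ∈ M.map Prod.fst} := by
      apply le_csInf
      · obtain ⟨q, hq⟩ := Multiset.exists_mem_of_ne_zero hM0
        exact ⟨q.1, Multiset.mem_map_of_mem _ hq⟩
      · rintro y hy
        have hy' : y ∈ M.map Prod.fst := hy
        obtain ⟨q, hq, rfl⟩ := Multiset.mem_map.mp hy'
        rcases (mem_evalS a I q).mp hq with ⟨rfl, h⟩ | ⟨rfl, h⟩ | ⟨rfl, h⟩ | ⟨rfl, h⟩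
        · exact absurd h h11
        · norm_num
        · exact absurd h h21
        · norm_num
    rw [hx] at h2le; linarith
  · rintro ⟨hΓ, h11, h21⟩ l hl
    rcases hl with rfl | rfl | h
    · simpa [satLit, satBodyAtom] using hΓ
    · simp only [satLit, if_false, satBodyAtom, Bool.false_eq_true]
      set M := fuzzySetEval I (exS a) with hM
      have hmem : ((1:ℝ), gr08) ∈ M := (mem_evalS a I _).mpr (Or.inl ⟨rfl, h11⟩)
      have hM0 : M ≠ 0 := fun h0 => by rw [h0] at hmem; exact absurd hmem (by simp)
      refine ⟨sInf {x | x ∈ M.map Prod.fst}, minGrade M, by rw [aggEval, if_neg hM0], ?_, ?_⟩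
      · show sInf {x | x ∈ M.map Prod.fst} ≤ 1
        apply csInf_le
        · refine ⟨1, ?_⟩
          rintro y hy
          have hy' : y ∈ M.map Prod.fst := hy
          obtain ⟨q, hq, rfl⟩ := Multiset.mem_map.mp hy'
          rcases (mem_evalS a I q).mp hq with ⟨rfl, _⟩ | ⟨rfl, _⟩ | ⟨rfl, _⟩ | ⟨rfl, _⟩ <;> norm_num
        · exact (Multiset.mem_map_of_mem Prod.fst hmem : ((1:ℝ), gr08).1 ∈ M.map Prod.fst)
      · apply le_minGrade g41
        rintro q hq
        rcases (mem_evalS a I q).mp hq with ⟨rfl, _⟩ | ⟨rfl, _⟩ | ⟨rfl, h⟩ | ⟨rfl, _⟩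
        · exact g48
        · exact g44
        · exact absurd h h21
        · exact g49
    · exact absurd h (by simp)


lemma not_one_le_zero : ¬ (1:Grade) ≤ 0 := by rw [← Subtype.coe_le_coe]; norm_num
lemma not_g30 : ¬ gr03 ≤ 0 := by rw [gr03, ← Subtype.coe_le_coe]; norm_num
lemma not_g40 : ¬ gr04 ≤ 0 := by rw [gr04, ← Subtype.coe_le_coe]; norm_num
lemma not_g80 : ¬ gr08 ≤ 0 := by rw [gr08, ← Subtype.coe_le_coe]; norm_num
lemma not_g90 : ¬ gr09 ≤ 0 := by rw [gr09, ← Subtype.coe_le_coe]; norm_num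

lemma satBody_r1 (a : ℕ → ℕ → Atom) (J : Atom → Grade) : satBody J (exRule1 a) :=
  fun l hl => absurd hl List.not_mem_nil

lemma satBody_r2 (a : ℕ → ℕ → Atom) (J : Atom → Grade) : satBody J (exRule2 a) :=
  fun l hl => absurd hl List.not_mem_nil

lemma memP1 (a : ℕ → ℕ → Atom) (Γ : Atom) : exRule1 a ∈ exProg a Γ := Set.mem_insert _ _
lemma memP2 (a : ℕ → ℕ → Atom) (Γ : Atom) : exRule2 a ∈ exProg a Γ :=
  Set.mem_insert_of_mem _ (Set.mem_insert _ _)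
lemma memP3 (a : ℕ → ℕ → Atom) (Γ : Atom) : exRule3 a Γ ∈ exProg a Γ :=
  Set.mem_insert_of_mem _ (Set.mem_insert_of_mem _ rfl)

lemma mem_reduct {P : Set (Rule Atom)} {I : Atom → Grade} {r : Rule Atom} :
    r ∈ fuzzyReduct P I ↔ r ∈ P ∧ satBody I r := Iff.rfl

lemma model_of_reduct (a : ℕ → ℕ → Atom) (Γ : Atom) (I J : Atom → Grade)
    (h3 : ¬ satBody I (exRule3 a Γ))
    (h1 : satHead J (exRule1 a)) (h2 : satHead J (exRule2 a)) :
    isFuzzyModel J (fuzzyReduct (exProg a Γ) I) := by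
  constructor
  · rintro r ⟨hr, hb⟩
    simp only [exProg, Set.mem_insert_iff, Set.mem_singleton_iff] at hr
    rcases hr with rfl | rfl | rfl
    · exact fun _ => h1
    · exact fun _ => h2
    · exact absurd hb h3
  · rintro b μ ⟨r, _, _, _, h⟩; exact h

lemma two_le (u v : Atom) (g h : Grade) (I : Atom → Grade) (hu : g ≤ I u) (hv : h ≤ I v) :
    (fun b => if b = u then g else if b = v then h else 0) ≤ I := by
  intro b
  show (if b = u then g else if b = v then h else 0) ≤ I b
  by_cases hb : b = u
  · subst hb; rw [if_pos rfl]; exact hu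
  · rw [if_neg hb]
    by_cases hb' : b = v
    · subst hb'; rw [if_pos rfl]; exact hv
    · rw [if_neg hb']; exact unitInterval.nonneg'

lemma eq_two_of_le (u v : Atom) (g h : Grade) (J : Atom → Grade)
    (hle : J ≤ fun b => if b = u then g else if b = v then h else 0)
    (hu : g ≤ J u) (hv : h ≤ J v) :
    J = fun b => if b = u then g else if b = v then h else 0 := by
  funext b
  have hb : J b ≤ (if b = u then g else if b = v then h else 0) := hle b
  show J b = (if b = u then g else if b = v then h else 0)
  by_cases h1 : b = u
  · subst h1
    rw [if_pos rfl] at hb ⊢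
    exact le_antisymm hb hu
  · rw [if_neg h1] at hb ⊢
    by_cases h2 : b = v
    · subst h2
      rw [if_pos rfl] at hb ⊢
      exact le_antisymm hb hv
    · rw [if_neg h2] at hb ⊢
      exact le_antisymm hb unitInterval.nonneg'

lemma satHead_iff_r1 (a : ℕ → ℕ → Atom) (J : Atom → Grade) :
    satHead J (exRule1 a) ↔ gr08 ≤ J (a 1 1) ∨ gr04 ≤ J (a 1 2) := by
  constructor
  · rintro ⟨p, hp, hle⟩
    rcases (by simpa [exRule1] using hp : p = (a 1 1, gr08) ∨ p = (a 1 2, gr04)) with rfl | rfl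
    · exact Or.inl hle
    · exact Or.inr hle
  · rintro (h | h)
    · exact ⟨(a 1 1, gr08), by simp [exRule1], h⟩
    · exact ⟨(a 1 2, gr04), by simp [exRule1], h⟩

lemma satHead_iff_r2 (a : ℕ → ℕ → Atom) (J : Atom → Grade) :
    satHead J (exRule2 a) ↔ gr03 ≤ J (a 2 1) ∨ gr09 ≤ J (a 2 2) := by
  constructor
  · rintro ⟨p, hp, hle⟩
    rcases (by simpa [exRule2] using hp : p = (a 2 1, gr03) ∨ p = (a 2 2, gr09)) with rfl | rfl
    · exact Or.inl hle
    · exact Or.inr hle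
  · rintro (h | h)
    · exact ⟨(a 2 1, gr03), by simp [exRule2], h⟩
    · exact ⟨(a 2 2, gr09), by simp [exRule2], h⟩

end Helpers

/-- The program Π = {r1, r2, r3} has exactly the three fuzzy answer sets
I₁, I₂, I₃ described above. -/
theorem example_program_has_exactly_three_fuzzy_answer_sets {Atom : Type}
    (a : ℕ → ℕ → Atom) (Γ : Atom)
    (hdist : Set.InjOn (fun p : ℕ × ℕ => a p.1 p.2) (({1, 2} : Set ℕ) ×ˢ ({1, 2} : Set ℕ)))
    (hΓ : ∀ i ∈ ({1, 2} : Set ℕ), ∀ j ∈ ({1, 2} : Set ℕ), Γ ≠ a i j)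
    (I : Atom → Grade) :
    isFuzzyAnswerSet I (exProg a Γ) ↔ (I = exI1 a ∨ I = exI2 a ∨ I = exI3 a) := by
  have hmem1 : (1:ℕ) ∈ ({1,2}:Set ℕ) := by norm_num
  have hmem2 : (2:ℕ) ∈ ({1,2}:Set ℕ) := by norm_num
  have hD : ∀ i j k l : ℕ, i ∈ ({1,2}:Set ℕ) → j ∈ ({1,2}:Set ℕ) → k ∈ ({1,2}:Set ℕ) →
      l ∈ ({1,2}:Set ℕ) → (i ≠ k ∨ j ≠ l) → a i j ≠ a k l := by
    intro i j k l hi hj hk hl hne h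
    have heq : ((i, j) : ℕ × ℕ) = (k, l) :=
      hdist (Set.mk_mem_prod hi hj) (Set.mk_mem_prod hk hl) h
    rcases hne with hne | hne
    · exact hne (congrArg Prod.fst heq)
    · exact hne (congrArg Prod.snd heq)
  have n1112 := hD 1 1 1 2 hmem1 hmem1 hmem1 hmem2 (Or.inr (by norm_num))
  have n1121 := hD 1 1 2 1 hmem1 hmem1 hmem2 hmem1 (Or.inl (by norm_num))
  have n1122 := hD 1 1 2 2 hmem1 hmem1 hmem2 hmem2 (Or.inl (by norm_num))
  have n1221 := hD 1 2 2 1 hmem1 hmem2 hmem2 hmem1 (Or.inl (by norm_num))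
  have n1222 := hD 1 2 2 2 hmem1 hmem2 hmem2 hmem2 (Or.inl (by norm_num))
  have n2122 := hD 2 1 2 2 hmem2 hmem1 hmem2 hmem2 (Or.inr (by norm_num))
  have gΓ11 := hΓ 1 hmem1 1 hmem1
  have gΓ12 := hΓ 1 hmem1 2 hmem2
  have gΓ21 := hΓ 2 hmem2 1 hmem1
  have gΓ22 := hΓ 2 hmem2 2 hmem2
  constructor
  · intro hAS
    obtain ⟨⟨hmod, _⟩, hmin⟩ := hAS
    have hnb3 : ¬ satBody I (exRule3 a Γ) := by
      intro hb
      have hsat : satHead I (exRule3 a Γ) := hmod _ ⟨memP3 a Γ, hb⟩ hb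
      obtain ⟨p, hp, hle⟩ := hsat
      have hp' : p = (Γ, 1) := by simpa [exRule3] using hp
      subst hp'
      exact ((bodyR3_iff a Γ I).mp hb).1 hle
    have h1 := (satHead_iff_r1 a I).mp (hmod _ ⟨memP1 a Γ, satBody_r1 a I⟩ (satBody_r1 a I))
    have h2 := (satHead_iff_r2 a I).mp (hmod _ ⟨memP2 a Γ, satBody_r2 a I⟩ (satBody_r2 a I))
    by_cases h11 : gr08 ≤ I (a 1 1)
    · by_cases h21 : gr03 ≤ I (a 2 1)
      · -- I = I1
        left
        have hle : exI1 a ≤ I := two_le _ _ _ _ I h11 h21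
        have hmodel : isFuzzyModel (exI1 a) (fuzzyReduct (exProg a Γ) I) :=
          model_of_reduct a Γ I _ hnb3
            ((satHead_iff_r1 a _).mpr (Or.inl (by simp [exI1])))
            ((satHead_iff_r2 a _).mpr (Or.inl (by simp [exI1, Ne.symm n1121])))
        by_contra hne0
        exact hmin ⟨exI1 a, hmodel, hle, fun h => hne0 h.symm⟩
      · -- contradiction case via exI'
        exfalso
        have h22 : gr09 ≤ I (a 2 2) := h2.resolve_left h21
        have hΓ1 : 1 ≤ I Γ := by
          by_contra hc
          exact hnb3 ((bodyR3_iff a Γ I).mpr ⟨hc, h11, h21⟩)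
        have hle : exI' a ≤ I := two_le _ _ _ _ I h11 h22
        have hmodel : isFuzzyModel (exI' a) (fuzzyReduct (exProg a Γ) I) :=
          model_of_reduct a Γ I _ hnb3
            ((satHead_iff_r1 a _).mpr (Or.inl (by simp [exI'])))
            ((satHead_iff_r2 a _).mpr (Or.inr (by simp [exI', Ne.symm n1122])))
        have hne : exI' a ≠ I := by
          intro h
          have h0 : exI' a Γ = 0 := by simp [exI', gΓ11, gΓ22]
          rw [h] at h0
          rw [h0] at hΓ1
          exact not_one_le_zero hΓ1
        exact hmin ⟨exI' a, hmodel, hle, hne⟩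
    · have h12 : gr04 ≤ I (a 1 2) := h1.resolve_left h11
      have hnb3' : ∀ J : Atom → Grade, J = I → ¬ satBody J (exRule3 a Γ) := fun J hJ => hJ ▸ hnb3
      by_cases h21 : gr03 ≤ I (a 2 1)
      · -- I = I2
        right; left
        have hle : exI2 a ≤ I := two_le _ _ _ _ I h12 h21
        have hmodel : isFuzzyModel (exI2 a) (fuzzyReduct (exProg a Γ) I) :=
          model_of_reduct a Γ I _ hnb3
            ((satHead_iff_r1 a _).mpr (Or.inr (by simp [exI2])))
            ((satHead_iff_r2 a _).mpr (Or.inl (by simp [exI2, Ne.symm n1221])))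
        by_contra hne0
        exact hmin ⟨exI2 a, hmodel, hle, fun h => hne0 h.symm⟩
      · -- I = I3
        right; right
        have h22 : gr09 ≤ I (a 2 2) := h2.resolve_left h21
        have hle : exI3 a ≤ I := two_le _ _ _ _ I h12 h22
        have hmodel : isFuzzyModel (exI3 a) (fuzzyReduct (exProg a Γ) I) :=
          model_of_reduct a Γ I _ hnb3
            ((satHead_iff_r1 a _).mpr (Or.inr (by simp [exI3])))
            ((satHead_iff_r2 a _).mpr (Or.inr (by simp [exI3, Ne.symm n1222])))
        by_contra hne0
        exact hmin ⟨exI3 a, hmodel, hle, fun h => hne0 h.symm⟩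
  · rintro (rfl | rfl | rfl)
    · -- I1 is an answer set
      have hnb3 : ¬ satBody (exI1 a) (exRule3 a Γ) := by
        intro hb
        exact ((bodyR3_iff a Γ _).mp hb).2.2 (by simp [exI1, Ne.symm n1121])
      refine ⟨model_of_reduct a Γ _ _ hnb3
        ((satHead_iff_r1 a _).mpr (Or.inl (by simp [exI1])))
        ((satHead_iff_r2 a _).mpr (Or.inl (by simp [exI1, Ne.symm n1121]))), ?_⟩
      rintro ⟨J, ⟨hJmod, _⟩, hJle, hJne⟩
      apply hJne
      have hJ1 := (satHead_iff_r1 a J).mp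
        (hJmod _ ⟨memP1 a Γ, satBody_r1 a _⟩ (satBody_r1 a J))
      have hJ2 := (satHead_iff_r2 a J).mp
        (hJmod _ ⟨memP2 a Γ, satBody_r2 a _⟩ (satBody_r2 a J))
      have hu : gr08 ≤ J (a 1 1) := by
        refine hJ1.resolve_right fun h => ?_
        have : J (a 1 2) ≤ 0 := by
          have := hJle (a 1 2)
          simpa [exI1, Ne.symm n1112, n1221] using this
        exact not_g40 (le_trans h this)
      have hv : gr03 ≤ J (a 2 1) := by
        refine hJ2.resolve_right fun h => ?_
        have : J (a 2 2) ≤ 0 := by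
          have := hJle (a 2 2)
          simpa [exI1, Ne.symm n1122, Ne.symm n2122] using this
        exact not_g90 (le_trans h this)
      exact eq_two_of_le _ _ _ _ J hJle hu hv
    · -- I2 is an answer set
      have hnb3 : ¬ satBody (exI2 a) (exRule3 a Γ) := by
        intro hb
        have h := ((bodyR3_iff a Γ _).mp hb).2.1
        rw [show exI2 a (a 1 1) = 0 from by simp [exI2, n1112, n1121]] at h
        exact not_g80 h
      refine ⟨model_of_reduct a Γ _ _ hnb3
        ((satHead_iff_r1 a _).mpr (Or.inr (by simp [exI2])))
        ((satHead_iff_r2 a _).mpr (Or.inl (by simp [exI2, Ne.symm n1221]))), ?_⟩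
      rintro ⟨J, ⟨hJmod, _⟩, hJle, hJne⟩
      apply hJne
      have hJ1 := (satHead_iff_r1 a J).mp
        (hJmod _ ⟨memP1 a Γ, satBody_r1 a _⟩ (satBody_r1 a J))
      have hJ2 := (satHead_iff_r2 a J).mp
        (hJmod _ ⟨memP2 a Γ, satBody_r2 a _⟩ (satBody_r2 a J))
      have hu : gr04 ≤ J (a 1 2) := by
        refine hJ1.resolve_left fun h => ?_
        have : J (a 1 1) ≤ 0 := by
          have := hJle (a 1 1)
          simpa [exI2, n1112, n1121] using this
        exact not_g80 (le_trans h this)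
      have hv : gr03 ≤ J (a 2 1) := by
        refine hJ2.resolve_right fun h => ?_
        have : J (a 2 2) ≤ 0 := by
          have := hJle (a 2 2)
          simpa [exI2, Ne.symm n1222, Ne.symm n2122] using this
        exact not_g90 (le_trans h this)
      exact eq_two_of_le _ _ _ _ J hJle hu hv
    · -- I3 is an answer set
      have hnb3 : ¬ satBody (exI3 a) (exRule3 a Γ) := by
        intro hb
        have h := ((bodyR3_iff a Γ _).mp hb).2.1
        rw [show exI3 a (a 1 1) = 0 from by simp [exI3, n1112, n1122]] at h
        exact not_g80 h
      refine ⟨model_of_reduct a Γ _ _ hnb3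
        ((satHead_iff_r1 a _).mpr (Or.inr (by simp [exI3])))
        ((satHead_iff_r2 a _).mpr (Or.inr (by simp [exI3, Ne.symm n1222]))), ?_⟩
      rintro ⟨J, ⟨hJmod, _⟩, hJle, hJne⟩
      apply hJne
      have hJ1 := (satHead_iff_r1 a J).mp
        (hJmod _ ⟨memP1 a Γ, satBody_r1 a _⟩ (satBody_r1 a J))
      have hJ2 := (satHead_iff_r2 a J).mp
        (hJmod _ ⟨memP2 a Γ, satBody_r2 a _⟩ (satBody_r2 a J))
      have hu : gr04 ≤ J (a 1 2) := by
        refine hJ1.resolve_left fun h => ?_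
        have : J (a 1 1) ≤ 0 := by
          have := hJle (a 1 1)
          simpa [exI3, n1112, n1122] using this
        exact not_g80 (le_trans h this)
      have hv : gr09 ≤ J (a 2 2) := by
        refine hJ2.resolve_left fun h => ?_
        have : J (a 2 1) ≤ 0 := by
          have := hJle (a 2 1)
          simpa [exI3, Ne.symm n1221, n2122] using this
        exact not_g30 (le_trans h this)
      exact eq_two_of_le _ _ _ _ J hJle hu hv
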